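/- Let 0 = x_0 < x_1 < … < x_N = 1 be an arbitrary mesh and let ε > 0. Let b, c : [0,1] → ℝ be continuous with b(x) ≥ β > 0 and c(x) ≥ 0. Then the upwind matrix A_N is an L-matrix, and the vector w with w_i = 2 − x_i satisfies w_i > 0 and (A_N w)_i ≥ min{1, β} for all i = 0,…,N. Consequently A_N is an M-matrix (invertible with entrywise nonnegative inverse) and ‖A_N⁻¹‖ ≤ 2/min{1, β}, uniformly in ε and in the mesh. -/

import Mathlib

noncomputable def matNorm {n : ℕ} (A : Matrix (Fin n) (Fin n) ℝ) : ℝ :=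
  ⨆ i, ∑ j, |A i j|

noncomputable def vecNorm {n : ℕ} (v : Fin n → ℝ) : ℝ := ⨆ i, |v i|

noncomputable def upwind (b c : ℝ → ℝ) (ε : ℝ) (N : ℕ) (x : ℕ → ℝ) :
    Matrix (Fin (N + 1)) (Fin (N + 1)) ℝ :=
  fun i j =>
    let h : ℕ → ℝ := fun k => x k - x (k - 1)
    let hb : ℕ → ℝ := fun k => (h k + h (k + 1)) / 2
    if (i : ℕ) = 0 ∨ (i : ℕ) = N then (if j = i then 1 else 0)
    else if (j : ℕ) + 1 = (i : ℕ) then -ε / (h (i : ℕ) * hb (i : ℕ))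
    else if (j : ℕ) = (i : ℕ) + 1 then
      -ε / (h ((i : ℕ) + 1) * hb (i : ℕ)) - b (x (i : ℕ)) / h ((i : ℕ) + 1)
    else if j = i then
      ε / (h (i : ℕ) * hb (i : ℕ)) +
        (ε / (h ((i : ℕ) + 1) * hb (i : ℕ)) + b (x (i : ℕ)) / h ((i : ℕ) + 1)) +
        c (x (i : ℕ))
    else 0

lemma max_principle {n : ℕ} (A : Matrix (Fin (n+1)) (Fin (n+1)) ℝ)
    (w : Fin (n+1) → ℝ) (γ : ℝ) (hγ : 0 < γ)
    (hw : ∀ i, 0 < w i)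
    (hoff : ∀ i j, i ≠ j → A i j ≤ 0)
    (hAw : ∀ i, γ ≤ A.mulVec w i)
    (u : Fin (n+1) → ℝ) (hu : ∀ i, 0 ≤ A.mulVec u i) :
    ∀ i, 0 ≤ u i := by
  obtain ⟨i0, -, hi0⟩ := Finset.exists_max_image Finset.univ (fun i => -u i / w i)
    ⟨0, Finset.mem_univ 0⟩
  set s := -u i0 / w i0 with hs
  have key : ∀ i, 0 ≤ u i + s * w i := by
    intro i
    have h1 : -u i / w i ≤ s := hi0 i (Finset.mem_univ i)
    have h2 := (div_le_iff₀ (hw i)).mp h1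
    linarith
  have hv0 : u i0 + s * w i0 = 0 := by
    rw [hs, div_mul_cancel₀ _ (ne_of_gt (hw i0))]; ring
  by_cases hsp : s ≤ 0
  · intro i
    have h3 : s * w i ≤ 0 := mul_nonpos_of_nonpos_of_nonneg hsp (le_of_lt (hw i))
    linarith [key i]
  · exfalso
    push_neg at hsp
    set v : Fin (n+1) → ℝ := fun i => u i + s * w i with hvdef
    have hsum : A.mulVec v i0 = A.mulVec u i0 + s * A.mulVec w i0 := by
      simp only [Matrix.mulVec, dotProduct, hvdef]
      rw [Finset.mul_sum, ← Finset.sum_add_distrib]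
      exact Finset.sum_congr rfl (fun j _ => by ring)
    have hpos : 0 < A.mulVec v i0 := by
      have h4 : s * γ ≤ s * A.mulVec w i0 :=
        mul_le_mul_of_nonneg_left (hAw i0) (le_of_lt hsp)
      have h5 : 0 < s * γ := mul_pos hsp hγ
      have h6 := hu i0
      linarith [hsum]
    have hneg : A.mulVec v i0 ≤ 0 := by
      simp only [Matrix.mulVec, dotProduct]
      apply Finset.sum_nonpos
      intro j _
      by_cases hj : j = i0
      · subst hj; rw [show v j = 0 from hv0]; simp
      · exact mul_nonpos_of_nonpos_of_nonneg (hoff i0 j (Ne.symm hj)) (key j)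
    linarith

lemma upwind_alg (ε B C X0 X1 X2 : ℝ) (h1 : X0 < X1) (h2 : X1 < X2) :
    -ε / ((X1 - X0) * ((X1 - X0 + (X2 - X1)) / 2)) * (2 - X0) +
      (ε / ((X1 - X0) * ((X1 - X0 + (X2 - X1)) / 2)) +
        (ε / ((X2 - X1) * ((X1 - X0 + (X2 - X1)) / 2)) + B / (X2 - X1)) + C) * (2 - X1) +
      (-ε / ((X2 - X1) * ((X1 - X0 + (X2 - X1)) / 2)) - B / (X2 - X1)) * (2 - X2) =
    B + C * (2 - X1) := by
  have hDpos : (0:ℝ) < (X1 - X0 + (X2 - X1)) / 2 := by linarith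
  have hDne : (X1 - X0 + (X2 - X1)) / 2 ≠ 0 := ne_of_gt hDpos
  have d1 : X1 - X0 ≠ 0 := by linarith
  have d2 : X2 - X1 ≠ 0 := by linarith
  have key : ∀ (a d e : ℝ), d ≠ 0 → e ≠ 0 → a / (d * e) * d = a / e := by
    intro a d e hd he
    field_simp
  have t1 : ε / ((X1 - X0) * ((X1 - X0 + (X2 - X1)) / 2)) * (2 - X1)
      - ε / ((X1 - X0) * ((X1 - X0 + (X2 - X1)) / 2)) * (2 - X0)
      = -(ε / ((X1 - X0 + (X2 - X1)) / 2)) := by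
    have k := key ε (X1 - X0) ((X1 - X0 + (X2 - X1)) / 2) d1 hDne
    calc ε / ((X1 - X0) * ((X1 - X0 + (X2 - X1)) / 2)) * (2 - X1)
        - ε / ((X1 - X0) * ((X1 - X0 + (X2 - X1)) / 2)) * (2 - X0)
        = -(ε / ((X1 - X0) * ((X1 - X0 + (X2 - X1)) / 2)) * (X1 - X0)) := by ring
      _ = -(ε / ((X1 - X0 + (X2 - X1)) / 2)) := by rw [k]
  have t2 : ε / ((X2 - X1) * ((X1 - X0 + (X2 - X1)) / 2)) * (2 - X1)
      - ε / ((X2 - X1) * ((X1 - X0 + (X2 - X1)) / 2)) * (2 - X2)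
      = ε / ((X1 - X0 + (X2 - X1)) / 2) := by
    have k := key ε (X2 - X1) ((X1 - X0 + (X2 - X1)) / 2) d2 hDne
    calc ε / ((X2 - X1) * ((X1 - X0 + (X2 - X1)) / 2)) * (2 - X1)
        - ε / ((X2 - X1) * ((X1 - X0 + (X2 - X1)) / 2)) * (2 - X2)
        = ε / ((X2 - X1) * ((X1 - X0 + (X2 - X1)) / 2)) * (X2 - X1) := by ring
      _ = ε / ((X1 - X0 + (X2 - X1)) / 2) := k
  have t3 : B / (X2 - X1) * (2 - X1) - B / (X2 - X1) * (2 - X2) = B := by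
    calc B / (X2 - X1) * (2 - X1) - B / (X2 - X1) * (2 - X2)
        = B / (X2 - X1) * (X2 - X1) := by ring
      _ = B := div_mul_cancel₀ B d2
  calc -ε / ((X1 - X0) * ((X1 - X0 + (X2 - X1)) / 2)) * (2 - X0) +
      (ε / ((X1 - X0) * ((X1 - X0 + (X2 - X1)) / 2)) +
        (ε / ((X2 - X1) * ((X1 - X0 + (X2 - X1)) / 2)) + B / (X2 - X1)) + C) * (2 - X1) +
      (-ε / ((X2 - X1) * ((X1 - X0 + (X2 - X1)) / 2)) - B / (X2 - X1)) * (2 - X2)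
      = (ε / ((X1 - X0) * ((X1 - X0 + (X2 - X1)) / 2)) * (2 - X1)
          - ε / ((X1 - X0) * ((X1 - X0 + (X2 - X1)) / 2)) * (2 - X0))
        + (ε / ((X2 - X1) * ((X1 - X0 + (X2 - X1)) / 2)) * (2 - X1)
          - ε / ((X2 - X1) * ((X1 - X0 + (X2 - X1)) / 2)) * (2 - X2))
        + (B / (X2 - X1) * (2 - X1) - B / (X2 - X1) * (2 - X2))
        + C * (2 - X1) := by ring
    _ = -(ε / ((X1 - X0 + (X2 - X1)) / 2)) + ε / ((X1 - X0 + (X2 - X1)) / 2) + B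
          + C * (2 - X1) := by rw [t1, t2, t3]
    _ = B + C * (2 - X1) := by ring

/-- on an arbitrary mesh `0 = x_0 < … < x_N = 1`, the upwind matrix
`A_N` is an L-matrix, `w_i = 2 − x_i` satisfies `w > 0` and `A_N w ≥ min{1,β}`,
hence `A_N` is an M-matrix with `‖A_N⁻¹‖ ≤ 2/min{1,β}`, uniformly in `ε` and the mesh. -/
theorem stmt_8 (N : ℕ) (hN : 2 ≤ N) (x : ℕ → ℝ) (hx0 : x 0 = 0) (hxN : x N = 1)
    (hmono : ∀ i < N, x i < x (i + 1))
    (ε : ℝ) (hε : 0 < ε) (b c : ℝ → ℝ)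
    (hb : ContinuousOn b (Set.Icc 0 1)) (hc : ContinuousOn c (Set.Icc 0 1))
    (β : ℝ) (hβ : 0 < β)
    (hbl : ∀ t ∈ Set.Icc (0 : ℝ) 1, β ≤ b t)
    (hcl : ∀ t ∈ Set.Icc (0 : ℝ) 1, 0 ≤ c t) :
    (∀ i, 0 < upwind b c ε N x i i) ∧
      (∀ i j, i ≠ j → upwind b c ε N x i j ≤ 0) ∧
      (∀ i : Fin (N + 1), 0 < 2 - x (i : ℕ)) ∧
      (∀ i, min 1 β ≤ (upwind b c ε N x).mulVec (fun j : Fin (N + 1) => 2 - x (j : ℕ)) i) ∧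
      IsUnit (upwind b c ε N x) ∧
      (∀ i j, 0 ≤ (upwind b c ε N x)⁻¹ i j) ∧
      matNorm (upwind b c ε N x)⁻¹ ≤ 2 / min 1 β := by
  set A := upwind b c ε N x with hA
  set w : Fin (N+1) → ℝ := fun j => 2 - x (j : ℕ) with hwdef
  set γ : ℝ := min 1 β with hγdef
  have hγ : 0 < γ := lt_min one_pos hβ
  -- mesh monotonicity
  have xmono : ∀ j, j ≤ N → ∀ i, i ≤ j → x i ≤ x j := by
    intro j
    induction j with
    | zero => intro _ i hi; interval_cases i; exact le_rfl
    | succ k ih =>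
      intro hj i hi
      rcases Nat.lt_or_ge i (k+1) with h1 | h1
      · have h2 : x i ≤ x k := ih (by omega) i (by omega)
        have h3 : x k < x (k+1) := hmono k (by omega)
        linarith
      · have : i = k + 1 := by omega
        simp [this]
  have xmem : ∀ k, k ≤ N → x k ∈ Set.Icc (0:ℝ) 1 := by
    intro k hk
    have h1 := xmono k hk 0 (Nat.zero_le k)
    have h2 := xmono N le_rfl k hk
    rw [hx0] at h1; rw [hxN] at h2
    exact ⟨h1, h2⟩
  have hstep : ∀ k, 1 ≤ k → k ≤ N → 0 < x k - x (k-1) := by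
    intro k h1 h2
    have h3 : x (k-1) < x (k-1+1) := hmono (k-1) (by omega)
    have h4 : k - 1 + 1 = k := by omega
    rw [h4] at h3
    linarith
  -- positivity of w
  have hwpos : ∀ i : Fin (N+1), 0 < w i := by
    intro i
    have := (xmem i (by omega)).2
    simp only [hwdef]; linarith
  -- diagonal positivity
  have hdiag : ∀ i, 0 < A i i := by
    intro i
    by_cases h0 : (i:ℕ) = 0 ∨ (i:ℕ) = N
    · simp only [hA, upwind, if_pos h0, if_pos rfl, eq_self_iff_true, if_true, zero_lt_one]
    · push_neg at h0
      have hi1 : 1 ≤ (i:ℕ) := by omega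
      have hiN : (i:ℕ) < N := by
        have := i.isLt; omega
      have hH1 : 0 < x i - x ((i:ℕ)-1) := hstep i hi1 (by omega)
      have hH2 : 0 < x ((i:ℕ)+1) - x i := by
        have := hstep ((i:ℕ)+1) (by omega) (by omega)
        simpa [Nat.add_sub_cancel] using this
      have hHB : 0 < (x i - x ((i:ℕ)-1) + (x ((i:ℕ)+1) - x i)) / 2 := by linarith
      have hBpos : 0 < b (x i) := lt_of_lt_of_le hβ (hbl _ (xmem i (by omega)))
      have hCpos : 0 ≤ c (x i) := hcl _ (xmem i (by omega))
      have e : A i i =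
          ε / ((x i - x ((i:ℕ)-1)) * ((x i - x ((i:ℕ)-1) + (x ((i:ℕ)+1) - x i))/2)) +
            (ε / ((x ((i:ℕ)+1) - x i) * ((x i - x ((i:ℕ)-1) + (x ((i:ℕ)+1) - x i))/2)) +
              b (x i) / (x ((i:ℕ)+1) - x i)) + c (x i) := by
        simp only [hA, upwind, not_or.mpr h0, if_false, Nat.add_sub_cancel, if_pos rfl]
        norm_num
      rw [e]
      have t1 : 0 < ε / ((x i - x ((i:ℕ)-1)) * ((x i - x ((i:ℕ)-1) + (x ((i:ℕ)+1) - x i))/2)) :=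
        div_pos hε (mul_pos hH1 hHB)
      have t2 : 0 < ε / ((x ((i:ℕ)+1) - x i) * ((x i - x ((i:ℕ)-1) + (x ((i:ℕ)+1) - x i))/2)) :=
        div_pos hε (mul_pos hH2 hHB)
      have t3 : 0 < b (x i) / (x ((i:ℕ)+1) - x i) := div_pos hBpos hH2
      linarith
  -- off-diagonal nonpositivity
  have hoff : ∀ i j, i ≠ j → A i j ≤ 0 := by
    intro i j hij
    by_cases h0 : (i:ℕ) = 0 ∨ (i:ℕ) = N
    · simp only [hA, upwind, if_pos h0, if_neg (Ne.symm hij), le_refl]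
    · push_neg at h0
      have hi1 : 1 ≤ (i:ℕ) := by omega
      have hiN : (i:ℕ) < N := by have := i.isLt; omega
      have hH1 : 0 < x i - x ((i:ℕ)-1) := hstep i hi1 (by omega)
      have hH2 : 0 < x ((i:ℕ)+1) - x i := by
        have := hstep ((i:ℕ)+1) (by omega) (by omega)
        simpa [Nat.add_sub_cancel] using this
      have hHB : 0 < (x i - x ((i:ℕ)-1) + (x ((i:ℕ)+1) - x i)) / 2 := by linarith
      have hBpos : 0 < b (x i) := lt_of_lt_of_le hβ (hbl _ (xmem i (by omega)))
      by_cases hj1 : (j:ℕ) + 1 = (i:ℕ)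
      · have e : A i j =
            -ε / ((x i - x ((i:ℕ)-1)) * ((x i - x ((i:ℕ)-1) + (x ((i:ℕ)+1) - x i))/2)) := by
          simp only [hA, upwind, not_or.mpr h0, if_false, Nat.add_sub_cancel, if_pos hj1]
        rw [e, neg_div]
        have := div_pos hε (mul_pos hH1 hHB)
        linarith
      · by_cases hj2 : (j:ℕ) = (i:ℕ) + 1
        · have e : A i j =
              -ε / ((x ((i:ℕ)+1) - x i) * ((x i - x ((i:ℕ)-1) + (x ((i:ℕ)+1) - x i))/2))
                - b (x i) / (x ((i:ℕ)+1) - x i) := by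
            simp only [hA, upwind, not_or.mpr h0, if_false, Nat.add_sub_cancel,
              if_neg hj1, if_pos hj2]
          rw [e, neg_div]
          have t1 := div_pos hε (mul_pos hH2 hHB)
          have t2 := div_pos hBpos hH2
          linarith
        · have e : A i j = 0 := by
            simp only [hA, upwind, not_or.mpr h0, if_false, Nat.add_sub_cancel,
              if_neg hj1, if_neg hj2, if_neg (Ne.symm hij)]
          rw [e]
  -- A w ≥ γ
  have hAw : ∀ i, γ ≤ A.mulVec w i := by
    intro i
    by_cases h0 : (i:ℕ) = 0 ∨ (i:ℕ) = N
    · have e : A.mulVec w i = w i := by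
        simp only [hA, upwind, Matrix.mulVec, dotProduct, if_pos h0]
        simp [ite_mul]
      rw [e]
      have h2 := (xmem i (by omega)).2
      have h3 : γ ≤ 1 := min_le_left 1 β
      simp only [hwdef]; linarith
    · push_neg at h0
      have hi1 : 1 ≤ (i:ℕ) := by omega
      have hiN : (i:ℕ) < N := by have := i.isLt; omega
      set j1 : Fin (N+1) := ⟨(i:ℕ)-1, by omega⟩ with hj1def
      set j3 : Fin (N+1) := ⟨(i:ℕ)+1, by omega⟩ with hj3def
      have hne1 : j1 ≠ i := Fin.ne_of_val_ne (show (i:ℕ)-1 ≠ (i:ℕ) by omega)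
      have hne2 : j1 ≠ j3 := Fin.ne_of_val_ne (show (i:ℕ)-1 ≠ (i:ℕ)+1 by omega)
      have hne3 : i ≠ j3 := Fin.ne_of_val_ne (show (i:ℕ) ≠ (i:ℕ)+1 by omega)
      have hsum : A.mulVec w i = A i j1 * w j1 + A i i * w i + A i j3 * w j3 := by
        simp only [Matrix.mulVec, dotProduct]
        rw [← Finset.sum_subset (Finset.subset_univ ({j1, i, j3} : Finset (Fin (N+1))))]
        · rw [Finset.sum_insert (by simp [hne1, hne2]),
            Finset.sum_insert (by simp [hne3]), Finset.sum_singleton]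
          ring
        · intro j _ hj
          simp only [Finset.mem_insert, Finset.mem_singleton, not_or] at hj
          obtain ⟨hja, hjb, hjc⟩ := hj
          have c1 : ¬((j:ℕ) + 1 = (i:ℕ)) := by
            intro h
            exact hja (by apply Fin.ext; simp [hj1def]; omega)
          have c2 : ¬((j:ℕ) = (i:ℕ) + 1) := by
            intro h
            exact hjc (by apply Fin.ext; simp [hj3def]; omega)
          have e : A i j = 0 := by
            simp only [hA, upwind, not_or.mpr h0, if_false, Nat.add_sub_cancel,
              if_neg c1, if_neg c2, if_neg hjb]
          rw [e, zero_mul]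
      have hH1 : 0 < x i - x ((i:ℕ)-1) := hstep i hi1 (by omega)
      have hH2 : 0 < x ((i:ℕ)+1) - x i := by
        have := hstep ((i:ℕ)+1) (by omega) (by omega)
        simpa [Nat.add_sub_cancel] using this
      have hHB : 0 < (x i - x ((i:ℕ)-1) + (x ((i:ℕ)+1) - x i)) / 2 := by linarith
      have e1 : A i j1 =
          -ε / ((x i - x ((i:ℕ)-1)) * ((x i - x ((i:ℕ)-1) + (x ((i:ℕ)+1) - x i))/2)) := by
        simp only [hA, upwind, not_or.mpr h0, if_false, Nat.add_sub_cancel,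
          if_pos (show ((j1:ℕ)) + 1 = (i:ℕ) by simp [hj1def]; omega)]
      have e2 : A i i =
          ε / ((x i - x ((i:ℕ)-1)) * ((x i - x ((i:ℕ)-1) + (x ((i:ℕ)+1) - x i))/2)) +
            (ε / ((x ((i:ℕ)+1) - x i) * ((x i - x ((i:ℕ)-1) + (x ((i:ℕ)+1) - x i))/2)) +
              b (x i) / (x ((i:ℕ)+1) - x i)) + c (x i) := by
        simp only [hA, upwind, not_or.mpr h0, if_false, Nat.add_sub_cancel, if_pos rfl]
        norm_num
      have e3 : A i j3 =
          -ε / ((x ((i:ℕ)+1) - x i) * ((x i - x ((i:ℕ)-1) + (x ((i:ℕ)+1) - x i))/2))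
            - b (x i) / (x ((i:ℕ)+1) - x i) := by
        simp only [hA, upwind, not_or.mpr h0, if_false, Nat.add_sub_cancel]
        rw [if_neg (show ¬((i:ℕ) + 1 + 1 = (i:ℕ)) by omega), if_pos (show (i:ℕ) + 1 = (i:ℕ) + 1 from rfl)]
      have ew1 : w j1 = 2 - x ((i:ℕ)-1) := by simp [hwdef, hj1def]
      have ew3 : w j3 = 2 - x ((i:ℕ)+1) := by simp [hwdef, hj3def]
      have ewi : w i = 2 - x i := rfl
      have key : A.mulVec w i = b (x i) + c (x i) * (2 - x i) := by
        rw [hsum, e1, e2, e3, ew1, ew3, ewi]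
        have halg := upwind_alg ε (b (x (i:ℕ))) (c (x (i:ℕ)))
          (x ((i:ℕ)-1)) (x (i:ℕ)) (x ((i:ℕ)+1)) (by linarith) (by linarith)
        linarith [halg]
      rw [key]
      have hBl : β ≤ b (x i) := hbl _ (xmem i (by omega))
      have hCl : 0 ≤ c (x i) := hcl _ (xmem i (by omega))
      have hx1 : x i ≤ 1 := (xmem i (by omega)).2
      have h3 : γ ≤ β := min_le_right 1 β
      nlinarith
  -- M-matrix part via maximum principle
  have mp := max_principle A w γ hγ hwpos hoff hAw
  have hdet : A.det ≠ 0 := by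
    intro h0
    obtain ⟨v, hv, hAv⟩ := (Matrix.exists_mulVec_eq_zero_iff).mpr h0
    have h1 : ∀ i, 0 ≤ v i := mp v (fun i => by rw [hAv]; exact le_rfl)
    have h2 : ∀ i, 0 ≤ (-v) i := by
      apply mp (-v)
      intro i
      rw [Matrix.mulVec_neg, hAv]
      simp
    apply hv
    funext i
    have := h1 i; have h2' := h2 i
    simp only [Pi.neg_apply] at h2'
    simp only [Pi.zero_apply]
    linarith
  have hunit : IsUnit A := (Matrix.isUnit_iff_isUnit_det A).mpr (isUnit_iff_ne_zero.mpr hdet)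
  have hAAinv : A * A⁻¹ = 1 := Matrix.mul_nonsing_inv A (isUnit_iff_ne_zero.mpr hdet)
  have hAinvA : A⁻¹ * A = 1 := Matrix.nonsing_inv_mul A (isUnit_iff_ne_zero.mpr hdet)
  have hinvnn : ∀ i j, 0 ≤ A⁻¹ i j := by
    intro i j
    have := mp (fun k => A⁻¹ k j) ?_ i
    · exact this
    · intro i'
      have e : A.mulVec (fun k => A⁻¹ k j) i' = (A * A⁻¹) i' j := by
        simp [Matrix.mulVec, dotProduct, Matrix.mul_apply]
      rw [e, hAAinv]
      by_cases h : i' = j <;> simp [Matrix.one_apply, h]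
  -- row sums of A⁻¹
  have hrow : ∀ i, ∑ j, A⁻¹ i j ≤ 2 / γ := by
    intro i
    have hwi : (A⁻¹).mulVec (A.mulVec w) i = w i := by
      rw [Matrix.mulVec_mulVec, hAinvA, Matrix.one_mulVec]
    have hge : γ * ∑ j, A⁻¹ i j ≤ (A⁻¹).mulVec (A.mulVec w) i := by
      simp only [Matrix.mulVec, dotProduct]
      rw [Finset.mul_sum]
      apply Finset.sum_le_sum
      intro j _
      have h1 := hinvnn i j
      have h2 := hAw j
      calc γ * A⁻¹ i j = A⁻¹ i j * γ := by ring
        _ ≤ A⁻¹ i j * A.mulVec w j := mul_le_mul_of_nonneg_left h2 h1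
    have hw2 : w i ≤ 2 := by
      have := (xmem i (by omega)).1
      simp only [hwdef]; linarith
    have := le_trans hge (le_of_eq hwi)
    rw [le_div_iff₀ hγ]
    calc (∑ j, A⁻¹ i j) * γ = γ * ∑ j, A⁻¹ i j := by ring
      _ ≤ w i := this
      _ ≤ 2 := hw2
  refine ⟨hdiag, hoff, hwpos, hAw, hunit, hinvnn, ?_⟩
  apply ciSup_le
  intro i
  calc (∑ j, |A⁻¹ i j|) = ∑ j, A⁻¹ i j := by
        apply Finset.sum_congr rfl
        intro j _
        exact abs_of_nonneg (hinvnn i j)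
    _ ≤ 2 / γ := hrow i
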